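/- Let n ≥ 1 and d be natural numbers with d > (π/2)·√n, let r₀ be the smallest root of x ↦ T_d(x/n - 1), let α > 0, and let m be an even natural number. Define s(x) = α·T_d((x-1+r₀)/n - 1)^m. Then s(0) ≥ α·((1/4)·(1 + sqrt(2(1-r₀)/n))^d)^m. -/

import Mathlib

/-- Value of Chebyshev T at `-(1+y)` for `y ≥ 0`, via hyperbolic cosine. -/
lemma cheb_neg_eval (d : ℕ) (y : ℝ) (hy : 0 ≤ y) :
    (Polynomial.Chebyshev.T ℝ d).eval (-(1 + y)) =
      (-1 : ℝ) ^ d * Real.cosh (d * Real.log (1 + y + Real.sqrt (y ^ 2 + 2 * y))) := by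
  set t : ℝ := 1 + y + Real.sqrt (y ^ 2 + 2 * y) with ht
  have hsq : Real.sqrt (y ^ 2 + 2 * y) ^ 2 = y ^ 2 + 2 * y :=
    Real.sq_sqrt (by nlinarith [Real.sqrt_nonneg (y ^ 2 + 2 * y)])
  have hsnn : 0 ≤ Real.sqrt (y ^ 2 + 2 * y) := Real.sqrt_nonneg _
  have htpos : 0 < t := by simp only [ht]; nlinarith
  have htinv : t⁻¹ = 1 + y - Real.sqrt (y ^ 2 + 2 * y) := by
    have : t * (1 + y - Real.sqrt (y ^ 2 + 2 * y)) = 1 := by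
      simp only [ht]; nlinarith
    exact inv_eq_of_mul_eq_one_right this
  set u : ℝ := Real.log t with hu
  have hcosh : Real.cosh u = 1 + y := by
    rw [hu, Real.cosh_log htpos, htinv]; ring
  -- complex computation
  have key : (Polynomial.Chebyshev.T ℂ d).eval ((-(1 + y) : ℝ) : ℂ) =
      ((((-1 : ℝ) ^ d * Real.cosh (d * u)) : ℝ) : ℂ) := by
    have hcos : Complex.cos ((Real.pi : ℂ) + (u : ℂ) * Complex.I) = ((-(1 + y) : ℝ) : ℂ) := by
      rw [Complex.cos_add, Complex.cos_mul_I, Complex.sin_mul_I]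
      simp [← Complex.ofReal_cosh, hcosh]
    rw [← hcos]
    have := Polynomial.Chebyshev.T_complex_cos ((Real.pi : ℂ) + (u : ℂ) * Complex.I) (d : ℤ)
    rw [this]
    have : ((d : ℤ) : ℂ) * ((Real.pi : ℂ) + (u : ℂ) * Complex.I)
        = (d : ℂ) * Real.pi + ((d * u : ℝ) : ℂ) * Complex.I := by
      push_cast; ring
    rw [this, Complex.cos_add, Complex.cos_mul_I, Complex.sin_mul_I]
    have hsin : Complex.sin ((d : ℂ) * Real.pi) = 0 := by
      have := Complex.sin_int_mul_pi (d : ℤ)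
      simpa using this
    have hcosd : Complex.cos ((d : ℂ) * Real.pi) = (-1 : ℂ) ^ d := by
      have hr : Real.cos (d * Real.pi) = (-1 : ℝ) ^ d := by
        simpa using Real.cos_nat_mul_pi_sub 0 d
      have : ((d : ℂ) * Real.pi) = (((d : ℝ) * Real.pi : ℝ) : ℂ) := by push_cast; ring
      rw [this, ← Complex.ofReal_cos, hr]
      push_cast; ring
    rw [hsin, hcosd, ← Complex.ofReal_cosh]
    push_cast
    ring
  have := Polynomial.Chebyshev.complex_ofReal_eval_T (-(1 + y)) (d : ℤ)
  rw [key] at this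
  exact Complex.ofReal_injective this

theorem stmt_11 (n d : ℕ) (hn : 1 ≤ n)
    (hd : (d : ℝ) > Real.pi / 2 * Real.sqrt n)
    (r₀ : ℝ) (hr₀ : IsLeast {x : ℝ | (Polynomial.Chebyshev.T ℝ d).eval (x / n - 1) = 0} r₀)
    (α : ℝ) (hα : 0 < α) (m : ℕ) (hm : Even m)
    (s : ℝ → ℝ)
    (hs : ∀ x, s x = α * ((Polynomial.Chebyshev.T ℝ d).eval ((x - 1 + r₀) / n - 1)) ^ m) :
    s 0 ≥ α * ((1 / 4) * (1 + Real.sqrt (2 * (1 - r₀) / n)) ^ d) ^ m := by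
  have hn' : (0 : ℝ) < n := by exact_mod_cast hn
  have hπ := Real.pi_pos
  have hsn : (1 : ℝ) ≤ Real.sqrt n := by
    rw [show (1:ℝ) = Real.sqrt 1 by simp]
    exact Real.sqrt_le_sqrt (by exact_mod_cast hn)
  have hdpos : (0 : ℝ) < d := lt_of_lt_of_le (by nlinarith) hd.le
  -- r₀ ≤ 1 via the root n(1 - cos(π/(2d)))
  have hroot : (n : ℝ) * (1 - Real.cos (Real.pi / (2 * d))) ∈
      {x : ℝ | (Polynomial.Chebyshev.T ℝ d).eval (x / n - 1) = 0} := by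
    have harg : ((n : ℝ) * (1 - Real.cos (Real.pi / (2 * d)))) / n - 1
        = Real.cos (Real.pi - Real.pi / (2 * d)) := by
      rw [Real.cos_pi_sub]
      field_simp
      ring
    simp only [Set.mem_setOf_eq, harg]
    rw [Polynomial.Chebyshev.T_real_cos]
    have : ((d : ℤ) : ℝ) * (Real.pi - Real.pi / (2 * d)) = d * Real.pi - Real.pi / 2 := by
      push_cast
      field_simp
    rw [this, Real.cos_sub, Real.cos_pi_div_two, Real.sin_pi_div_two]
    have : Real.sin ((d : ℝ) * Real.pi) = 0 := by
      have := Real.sin_int_mul_pi (d : ℤ); simpa using this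
    rw [this]; ring
  have hr1 : r₀ ≤ 1 := by
    have h1 := hr₀.2 hroot
    have hcb : 1 - (Real.pi / (2 * d)) ^ 2 / 2 ≤ Real.cos (Real.pi / (2 * d)) :=
      Real.one_sub_sq_div_two_le_cos
    have hbound : (n : ℝ) * (1 - Real.cos (Real.pi / (2 * d))) ≤ 1 := by
      have h2 : (n : ℝ) * (1 - Real.cos (Real.pi / (2 * d)))
          ≤ (n : ℝ) * ((Real.pi / (2 * d)) ^ 2 / 2) := by
        apply mul_le_mul_of_nonneg_left _ hn'.le
        linarith
      have h3 : (n : ℝ) * ((Real.pi / (2 * d)) ^ 2 / 2) ≤ 1 := by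
        rw [div_pow, div_div, ← mul_div_assoc, div_le_one (by positivity)]
        have h2d : Real.pi * Real.sqrt n < 2 * d := by nlinarith
        have hsq : Real.sqrt (n : ℝ) ^ 2 = n := Real.sq_sqrt hn'.le
        have hps : (0:ℝ) ≤ Real.pi * Real.sqrt n := by positivity
        have hmm := mul_self_lt_mul_self hps h2d
        nlinarith [hmm, hsq]
      linarith
    linarith
  -- set up y and apply the lemma
  set y : ℝ := (1 - r₀) / n with hy
  have hy0 : 0 ≤ y := div_nonneg (by linarith) hn'.le
  have harg0 : ((0 : ℝ) - 1 + r₀) / n - 1 = -(1 + y) := by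
    field_simp [hy]
    have hny : (n : ℝ) * y = 1 - r₀ := by rw [hy]; field_simp
    linarith
  set t : ℝ := 1 + y + Real.sqrt (y ^ 2 + 2 * y) with ht
  set u : ℝ := Real.log t with hu
  have heval := cheb_neg_eval d y hy0
  rw [hs 0, harg0, heval]
  have htpos : 0 < t := by
    have := Real.sqrt_nonneg (y ^ 2 + 2 * y); simp only [ht]; nlinarith
  have ht1 : 1 + Real.sqrt (2 * y) ≤ t := by
    have : Real.sqrt (2 * y) ≤ Real.sqrt (y ^ 2 + 2 * y) :=
      Real.sqrt_le_sqrt (by nlinarith)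
    simp only [ht]; linarith
  have hs2y : 0 ≤ Real.sqrt (2 * y) := Real.sqrt_nonneg _
  -- cosh(d u) ≥ t^d / 2 ≥ (1+√(2y))^d / 2
  have hcosh_ge : t ^ d / 2 ≤ Real.cosh (d * u) := by
    have hexp : Real.exp (d * u) = t ^ d := by
      rw [hu, Real.exp_nat_mul, Real.exp_log htpos]
    rw [Real.cosh_eq]
    have := Real.exp_pos (-(d * u))
    rw [hexp] at *
    linarith
  have hpow1 : (1 + Real.sqrt (2 * y)) ^ d ≤ t ^ d :=
    pow_le_pow_left₀ (by linarith) ht1 d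
  have hstep : (1 / 4 : ℝ) * (1 + Real.sqrt (2 * y)) ^ d ≤ Real.cosh (d * u) := by
    have h14 : (1 / 4 : ℝ) * (1 + Real.sqrt (2 * y)) ^ d ≤ t ^ d / 2 := by
      have hp : (0 : ℝ) ≤ (1 + Real.sqrt (2 * y)) ^ d := by positivity
      nlinarith
    linarith
  have hbnn : (0 : ℝ) ≤ (1 / 4 : ℝ) * (1 + Real.sqrt (2 * y)) ^ d := by positivity
  have hmul : ((-1 : ℝ) ^ d * Real.cosh (d * u)) ^ m = Real.cosh (d * u) ^ m := by
    have h1 : ((-1 : ℝ) ^ d) ^ m = 1 := by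
      rw [← pow_mul, mul_comm, pow_mul, hm.neg_one_pow, one_pow]
    rw [mul_pow, h1, one_mul]
  have h2y : 2 * (1 - r₀) / n = 2 * y := by
    rw [hy]; ring
  rw [hmul, h2y]
  apply mul_le_mul_of_nonneg_left _ hα.le
  exact pow_le_pow_left₀ hbnn hstep m
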